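/- There exists an absolute constant C₀ > 0 with the following property. Let n ≥ 2, r ≥ 1, c_1 ≥ 1, κ ≥ 1, δ_2 ∈ (0, 3r], and fix j ∈ [n]. Let q̂_{ij} ∈ (0,1] for all i ∈ [n], let U, U* ∈ ℝ^{n×r} have orthonormal columns, and assume for all i: ‖U^i‖² ≤ (16·c_1²·n/m)·q̂_{ij} and ‖U^i‖·‖(U*)^i‖ ≤ (8·c_1·κ·√r·n/m)·q̂_{ij}, where U^i, (U*)^i are the i-th rows. Let (δ_{ij})_{i∈[n]} be independent {0,1}-valued random variables with P(δ_{ij}=1) = q̂_{ij}, and set B^j = ∑_i δ_{ij}·(U^i)^T·U^i/q̂_{ij} and C^j = ∑_i δ_{ij}·(U^i)^T·(U*)^i/q̂_{ij} (both r×r matrices). If m ≥ C₀·c_1²·κ²·r³·n·log(n)/δ_2², then with probability at least 1 − 2/n²: ‖B^j − I_r‖ ≤ δ_2 and ‖C^j − U^T U*‖ ≤ δ_2. -/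

import Mathlib

open Matrix MeasureTheory ProbabilityTheory

/-- Spectral norm (largest singular value) of a real matrix, as the operator
norm of the induced map between Euclidean spaces. -/
noncomputable def specNorm {n₁ n₂ : ℕ} (A : Matrix (Fin n₁) (Fin n₂) ℝ) : ℝ :=
  ‖LinearMap.toContinuousLinearMap (Matrix.toEuclideanLin A)‖

lemma exp_le_one_add_add_sq {x : ℝ} (hx : |x| ≤ 1) : Real.exp x ≤ 1 + x + x ^ 2 := by
  have h := Real.exp_bound hx (n := 2) (by norm_num)
  have hs : ∑ m ∈ Finset.range 2, x ^ m / m.factorial = 1 + x := by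
    simp [Finset.sum_range_succ]
  rw [hs] at h
  have h2 : |x| ^ 2 = x ^ 2 := sq_abs x
  rw [h2] at h
  have h3 : x ^ 2 * (((2:ℕ).succ : ℝ) / ((2:ℕ).factorial * (2:ℕ))) = x ^ 2 * (3/4) := by
    norm_num [Nat.factorial]
  rw [h3] at h
  have := abs_le.mp h
  nlinarith [sq_nonneg x]

lemma bern_mgf_bound {q c : ℝ} (hq0 : 0 < q) (hq1 : q ≤ 1) (hc : |c| ≤ q) :
    (1 - q) * Real.exp (-c) + q * Real.exp (c * (1 - q) / q) ≤ Real.exp (c ^ 2 / q) := by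
  have hc1 : |(-c)| ≤ 1 := by rw [abs_neg]; linarith
  have h1 : Real.exp (-c) ≤ 1 + -c + (-c) ^ 2 := exp_le_one_add_add_sq hc1
  have hc2 : |c * (1 - q) / q| ≤ 1 := by
    rw [abs_div, abs_mul, abs_of_nonneg (by linarith : (0:ℝ) ≤ 1 - q), abs_of_pos hq0,
      div_le_one hq0]
    nlinarith [abs_nonneg c]
  have h2 : Real.exp (c * (1 - q) / q) ≤ 1 + c * (1 - q) / q + (c * (1 - q) / q) ^ 2 :=
    exp_le_one_add_add_sq hc2
  have h3 : 1 + c ^ 2 / q ≤ Real.exp (c ^ 2 / q) := by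
    linarith [Real.add_one_le_exp (c ^ 2 / q)]
  have key : (1 - q) * (1 + -c + (-c) ^ 2) + q * (1 + c * (1 - q) / q + (c * (1 - q) / q) ^ 2)
      ≤ 1 + c ^ 2 / q := by
    have hq' : q ≠ 0 := hq0.ne'
    rw [← sub_nonneg]
    have hexp : 1 + c ^ 2 / q -
        ((1 - q) * (1 + -c + (-c) ^ 2) + q * (1 + c * (1 - q) / q + (c * (1 - q) / q) ^ 2))
        = c ^ 2 := by
      field_simp
      ring
    rw [hexp]
    positivity
  have hA : (1 - q) * Real.exp (-c) ≤ (1 - q) * (1 + -c + (-c) ^ 2) :=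
    mul_le_mul_of_nonneg_left h1 (by linarith)
  have hB : q * Real.exp (c * (1 - q) / q) ≤ q * (1 + c * (1 - q) / q + (c * (1 - q) / q) ^ 2) :=
    mul_le_mul_of_nonneg_left h2 hq0.le
  linarith

lemma integral_comp_bernoulli {Ω : Type} [MeasureSpace Ω] [IsProbabilityMeasure (ℙ : Measure Ω)]
    {X : Ω → ℝ} (hm : Measurable X) (h01 : ∀ ω, X ω = 0 ∨ X ω = 1) {q : ℝ} (hq0 : 0 ≤ q)
    (hq : ℙ {ω | X ω = 1} = ENNReal.ofReal q) (g : ℝ → ℝ) :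
    Integrable (fun ω => g (X ω)) ℙ ∧ ∫ ω, g (X ω) = (1 - q) * g 0 + q * g 1 := by
  have hsm : MeasurableSet {ω | X ω = 1} := hm (measurableSet_singleton 1)
  have hfun : (fun ω => g (X ω)) =
      fun ω => g 0 + Set.indicator {ω | X ω = 1} (fun _ => g 1 - g 0) ω := by
    funext ω
    rcases h01 ω with h | h
    · rw [h, Set.indicator_of_notMem, add_zero]
      simp only [Set.mem_setOf_eq, h]
      norm_num
    · rw [h, Set.indicator_of_mem (by simpa [Set.mem_setOf_eq] using h)]
      ring
  have hint : Integrable (fun ω => g 0 + Set.indicator {ω | X ω = 1} (fun _ => g 1 - g 0) ω) ℙ :=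
    (integrable_const (g 0)).add ((integrable_const (g 1 - g 0)).indicator hsm)
  constructor
  · rw [hfun]; exact hint
  · rw [hfun, integral_add (integrable_const _) ((integrable_const (g 1 - g 0)).indicator hsm)]
    rw [integral_const, integral_indicator_const _ hsm]
    simp only [measureReal_def]
    rw [hq, ENNReal.toReal_ofReal hq0]
    simp [measure_univ]
    ring

lemma oneSided {n : ℕ} {Ω : Type} [MeasureSpace Ω] [IsProbabilityMeasure (ℙ : Measure Ω)]
    (X : Fin n → Ω → ℝ) (q a : Fin n → ℝ)
    (hmX : ∀ i, Measurable (X i)) (h01 : ∀ i ω, X i ω = 0 ∨ X i ω = 1)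
    (hind : iIndepFun X ℙ)
    (hq : ∀ i, ℙ {ω | X i ω = 1} = ENNReal.ofReal (q i))
    (hq0 : ∀ i, 0 < q i) (hq1 : ∀ i, q i ≤ 1)
    {M t : ℝ} (hM : 0 < M) (ha : ∀ i, |a i| ≤ M * q i) (hsum : (∑ i, |a i|) ≤ 1)
    (ht0 : 0 < t) (ht3 : t ≤ 3) :
    ℙ {ω | t ≤ ∑ i, a i * (X i ω / q i - 1)} ≤ ENNReal.ofReal (Real.exp (-(t ^ 2 / (8 * M)))) := by
  set s : ℝ := t / (6 * M) with hs_def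
  have hs0 : 0 < s := by positivity
  set Z : Fin n → Ω → ℝ := fun i ω => a i * (X i ω / q i - 1) with hZ_def
  have hmZ : ∀ i, Measurable (Z i) := fun i =>
    (((hmX i).div_const (q i)).sub measurable_const).const_mul (a i)
  have hindZ : iIndepFun Z ℙ := by
    have := hind.comp (fun i x => a i * (x / q i - 1))
      (fun i => ((measurable_id.div_const (q i)).sub measurable_const).const_mul (a i))
    exact this
  -- integrability and mgf value for each summand
  have hcomp : ∀ i, Integrable (fun ω => Real.exp (s * Z i ω)) ℙ ∧
      ∫ ω, Real.exp (s * Z i ω) = (1 - q i) * Real.exp (s * (a i * (0 / q i - 1)))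
        + q i * Real.exp (s * (a i * (1 / q i - 1))) := by
    intro i
    exact integral_comp_bernoulli (hmX i) (h01 i) (hq0 i).le (hq i)
      (fun x => Real.exp (s * (a i * (x / q i - 1))))
  have hmgf : ∀ i, mgf (Z i) ℙ s ≤ Real.exp ((s * a i) ^ 2 / q i) := by
    intro i
    have h2 := (hcomp i).2
    have hq0i := hq0 i
    have e0 : s * (a i * (0 / q i - 1)) = -(s * a i) := by
      rw [zero_div]; ring
    have e1 : s * (a i * (1 / q i - 1)) = (s * a i) * (1 - q i) / q i := by
      field_simp
    rw [e0, e1] at h2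
    have hbound : |s * a i| ≤ q i := by
      rw [abs_mul, abs_of_pos hs0]
      have hM' : M ≠ 0 := hM.ne'
      calc s * |a i| ≤ s * (M * q i) := by
            exact mul_le_mul_of_nonneg_left (ha i) hs0.le
        _ = t / 6 * q i := by rw [hs_def]; field_simp
        _ ≤ q i := by nlinarith [(hq0 i).le]
    have := bern_mgf_bound hq0i (hq1 i) hbound
    have hmgf_eq : mgf (Z i) ℙ s = ∫ ω, Real.exp (s * Z i ω) := rfl
    rw [hmgf_eq, h2]
    exact this
  -- Chernoff
  have hintS : Integrable (fun ω => Real.exp (s * (∑ i, Z i) ω)) ℙ :=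
    hindZ.integrable_exp_mul_sum hmZ (fun i _ => (hcomp i).1)
  have hchern := measure_ge_le_exp_mul_mgf (μ := ℙ) (X := ∑ i, Z i) t hs0.le hintS
  have hset : {ω | t ≤ (∑ i, Z i) ω} = {ω | t ≤ ∑ i, a i * (X i ω / q i - 1)} := by
    ext ω; simp [Finset.sum_apply, hZ_def]
  rw [hset] at hchern
  have hprod : mgf (∑ i, Z i) ℙ s = ∏ i, mgf (Z i) ℙ s := hindZ.mgf_sum hmZ Finset.univ
  have hprodle : ∏ i, mgf (Z i) ℙ s ≤ Real.exp (∑ i, (s * a i) ^ 2 / q i) := by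
    rw [Real.exp_sum]
    exact Finset.prod_le_prod (fun i _ => mgf_nonneg) (fun i _ => hmgf i)
  have hV : (∑ i, (s * a i) ^ 2 / q i) ≤ s ^ 2 * M := by
    have : ∀ i, (s * a i) ^ 2 / q i ≤ s ^ 2 * (M * |a i|) := by
      intro i
      rw [div_le_iff₀ (hq0 i)]
      have h1 : (a i) ^ 2 ≤ M * q i * |a i| := by
        have : |a i| * |a i| ≤ (M * q i) * |a i| :=
          mul_le_mul_of_nonneg_right (ha i) (abs_nonneg _)
        calc (a i) ^ 2 = |a i| * |a i| := by rw [← sq_abs (a i)]; ring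
          _ ≤ M * q i * |a i| := this
      calc (s * a i) ^ 2 = s ^ 2 * (a i) ^ 2 := by ring
        _ ≤ s ^ 2 * (M * q i * |a i|) := by nlinarith [sq_nonneg s]
        _ = s ^ 2 * (M * |a i|) * q i := by ring
    calc (∑ i, (s * a i) ^ 2 / q i) ≤ ∑ i, s ^ 2 * (M * |a i|) :=
          Finset.sum_le_sum (fun i _ => this i)
      _ = s ^ 2 * M * (∑ i, |a i|) := by
          rw [Finset.mul_sum]
          exact Finset.sum_congr rfl (fun i _ => by ring)
      _ ≤ s ^ 2 * M * 1 := mul_le_mul_of_nonneg_left hsum (by positivity)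
      _ = s ^ 2 * M := mul_one _
  have hfinal : Real.exp (-s * t) * mgf (∑ i, Z i) ℙ s ≤ Real.exp (-(t ^ 2 / (8 * M))) := by
    rw [hprod]
    calc Real.exp (-s * t) * ∏ i, mgf (Z i) ℙ s
        ≤ Real.exp (-s * t) * Real.exp (s ^ 2 * M) := by
          refine mul_le_mul_of_nonneg_left ?_ (Real.exp_pos _).le
          exact hprodle.trans (Real.exp_le_exp.mpr hV)
      _ = Real.exp (-s * t + s ^ 2 * M) := by rw [← Real.exp_add]
      _ ≤ Real.exp (-(t ^ 2 / (8 * M))) := by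
          rw [Real.exp_le_exp]
          have hM' : M ≠ 0 := hM.ne'
          have e1 : -s * t = -(t ^ 2 / (6 * M)) := by rw [hs_def]; field_simp
          have e2 : s ^ 2 * M = t ^ 2 / (36 * M) := by rw [hs_def]; field_simp; ring
          rw [e1, e2]
          have hu : 0 ≤ t ^ 2 / M := by positivity
          have r1 : t ^ 2 / (6 * M) = (t ^ 2 / M) / 6 := by ring
          have r2 : t ^ 2 / (36 * M) = (t ^ 2 / M) / 36 := by ring
          have r3 : t ^ 2 / (8 * M) = (t ^ 2 / M) / 8 := by ring
          rw [r1, r2, r3]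
          linarith
  have := hchern.trans hfinal
  exact (ENNReal.le_ofReal_iff_toReal_le (measure_ne_top _ _) (Real.exp_pos _).le).mpr this

lemma twoSided {n : ℕ} {Ω : Type} [MeasureSpace Ω] [IsProbabilityMeasure (ℙ : Measure Ω)]
    (X : Fin n → Ω → ℝ) (q a : Fin n → ℝ)
    (hmX : ∀ i, Measurable (X i)) (h01 : ∀ i ω, X i ω = 0 ∨ X i ω = 1)
    (hind : iIndepFun X ℙ)
    (hq : ∀ i, ℙ {ω | X i ω = 1} = ENNReal.ofReal (q i))
    (hq0 : ∀ i, 0 < q i) (hq1 : ∀ i, q i ≤ 1)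
    {M t : ℝ} (hM : 0 < M) (ha : ∀ i, |a i| ≤ M * q i) (hsum : (∑ i, |a i|) ≤ 1)
    (ht0 : 0 < t) (ht3 : t ≤ 3) :
    ℙ {ω | t < |∑ i, a i * (X i ω / q i - 1)|} ≤
      2 * ENNReal.ofReal (Real.exp (-(t ^ 2 / (8 * M)))) := by
  have h1 := oneSided X q a hmX h01 hind hq hq0 hq1 hM ha hsum ht0 ht3
  have h2 := oneSided X q (fun i => -a i) hmX h01 hind hq hq0 hq1 hM
    (fun i => by simpa using ha i) (by simpa using hsum) ht0 ht3
  have hsub : {ω | t < |∑ i, a i * (X i ω / q i - 1)|} ⊆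
      {ω | t ≤ ∑ i, a i * (X i ω / q i - 1)} ∪
      {ω | t ≤ ∑ i, (fun i => -a i) i * (X i ω / q i - 1)} := by
    intro ω hω
    simp only [Set.mem_setOf_eq] at hω ⊢
    rcases abs_cases (∑ i, a i * (X i ω / q i - 1)) with ⟨he, _⟩ | ⟨he, _⟩
    · left; rw [he] at hω; exact hω.le
    · right
      show t ≤ ∑ x, -a x * (X x ω / q x - 1)
      have hneg2 : (∑ x, -a x * (X x ω / q x - 1)) = -∑ i, a i * (X i ω / q i - 1) := by
        simp [neg_mul]
      rw [hneg2, ← he]; exact hω.le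
  calc ℙ {ω | t < |∑ i, a i * (X i ω / q i - 1)|} ≤
      ℙ ({ω | t ≤ ∑ i, a i * (X i ω / q i - 1)} ∪
        {ω | t ≤ ∑ i, (fun i => -a i) i * (X i ω / q i - 1)}) := measure_mono hsub
    _ ≤ ℙ {ω | t ≤ ∑ i, a i * (X i ω / q i - 1)} +
        ℙ {ω | t ≤ ∑ i, (fun i => -a i) i * (X i ω / q i - 1)} := measure_union_le _ _
    _ ≤ ENNReal.ofReal (Real.exp (-(t ^ 2 / (8 * M)))) +
        ENNReal.ofReal (Real.exp (-(t ^ 2 / (8 * M)))) := add_le_add h1 h2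
    _ = 2 * ENNReal.ofReal (Real.exp (-(t ^ 2 / (8 * M)))) := (two_mul _).symm

lemma specNorm_le_sqrt {n₁ n₂ : ℕ} (A : Matrix (Fin n₁) (Fin n₂) ℝ) :
    specNorm A ≤ Real.sqrt (∑ k, ∑ l, (A k l) ^ 2) := by
  apply ContinuousLinearMap.opNorm_le_bound _ (Real.sqrt_nonneg _)
  intro x
  have hcoe : (LinearMap.toContinuousLinearMap (Matrix.toEuclideanLin A)) x
      = Matrix.toEuclideanLin A x := rfl
  rw [hcoe]
  have hentry : ∀ k, (Matrix.toEuclideanLin A x) k = ∑ l, A k l * x l := by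
    intro k
    rw [Matrix.toEuclideanLin_apply]
    simp [Matrix.mulVec, dotProduct]
  have hnorm : ‖Matrix.toEuclideanLin A x‖
      = Real.sqrt (∑ k, (∑ l, A k l * x l) ^ 2) := by
    rw [EuclideanSpace.norm_eq]
    congr 1
    refine Finset.sum_congr rfl (fun k _ => ?_)
    rw [hentry k, Real.norm_eq_abs, sq_abs]
  have hxnorm : ‖x‖ = Real.sqrt (∑ l, (x l) ^ 2) := by
    rw [EuclideanSpace.norm_eq]
    congr 1
    refine Finset.sum_congr rfl (fun l _ => ?_)
    rw [Real.norm_eq_abs, sq_abs]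
  rw [hnorm, hxnorm]
  rw [← Real.sqrt_mul (by positivity)]
  apply Real.sqrt_le_sqrt
  rw [Finset.sum_mul]
  refine Finset.sum_le_sum (fun k _ => ?_)
  exact Finset.sum_mul_sq_le_sq_mul_sq _ _ _

lemma specNorm_le_of_entries {r : ℕ} (hr : 0 < r) (A : Matrix (Fin r) (Fin r) ℝ) {δ : ℝ}
    (hδ : 0 ≤ δ) (h : ∀ k l, |A k l| ≤ δ / r) : specNorm A ≤ δ := by
  refine (specNorm_le_sqrt A).trans ?_
  have hR : (0:ℝ) < r := by exact_mod_cast hr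
  have hsum : (∑ k, ∑ l, (A k l) ^ 2) ≤ δ ^ 2 := by
    have hle : ∀ k l : Fin r, (A k l) ^ 2 ≤ (δ / r) ^ 2 := fun k l => by
      have := h k l
      have h0 : (0:ℝ) ≤ δ / r := by positivity
      nlinarith [abs_nonneg (A k l), sq_abs (A k l)]
    calc (∑ k, ∑ l, (A k l) ^ 2) ≤ ∑ _k : Fin r, ∑ _l : Fin r, (δ / r) ^ 2 :=
          Finset.sum_le_sum (fun k _ => Finset.sum_le_sum (fun l _ => hle k l))
      _ = (r : ℝ) * ((r : ℝ) * (δ / r) ^ 2) := by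
          simp [Finset.sum_const, Finset.card_univ, mul_comm]
      _ = δ ^ 2 := by field_simp
  calc Real.sqrt (∑ k, ∑ l, (A k l) ^ 2) ≤ Real.sqrt (δ ^ 2) := Real.sqrt_le_sqrt hsum
    _ = δ := Real.sqrt_sq hδ

lemma aux_abs_mul_le {x y S : ℝ} (hx : x ^ 2 ≤ S) (hy : y ^ 2 ≤ S) : |x * y| ≤ S := by
  rw [abs_mul]
  nlinarith [sq_abs x, sq_abs y, sq_nonneg (|x| - |y|), abs_nonneg x, abs_nonneg y]

lemma aux_sum_le_one {S : ℝ} (h2 : S ^ 2 ≤ 1) (h0 : 0 ≤ S) : S ≤ 1 := by nlinarith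

lemma aux_coefB {c1 κ s N m : ℝ} (hc1 : 1 ≤ c1) (hκ : 1 ≤ κ) (hs : 1 ≤ s) (hN : 0 < N)
    (hm : 0 < m) : 16 * c1 ^ 2 * N / m ≤ 16 * c1 ^ 2 * κ * s * N / m := by
  apply (div_le_div_iff_of_pos_right hm).mpr
  have h1 : (1:ℝ) ≤ κ * s := by nlinarith
  have h2 : (0:ℝ) ≤ 16 * c1 ^ 2 * N := by positivity
  nlinarith [mul_nonneg h2 (sub_nonneg.mpr h1)]

lemma aux_coefC {c1 κ s N m : ℝ} (hc1 : 1 ≤ c1) (hκ : 1 ≤ κ) (hs : 1 ≤ s) (hN : 0 < N)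
    (hm : 0 < m) : 8 * c1 * κ * s * N / m ≤ 16 * c1 ^ 2 * κ * s * N / m := by
  apply (div_le_div_iff_of_pos_right hm).mpr
  have hc10 : (0:ℝ) ≤ c1 := by linarith
  have hκ0 : (0:ℝ) ≤ κ := by linarith
  have hs0 : (0:ℝ) ≤ s := by linarith
  have key : 0 ≤ (8 * c1 * (2 * c1 - 1)) * (κ * (s * N)) :=
    mul_nonneg (by nlinarith) (mul_nonneg hκ0 (mul_nonneg hs0 hN.le))
  nlinarith [key]

lemma aux_exponent {c1 κ R s N L δ2 m : ℝ} (hc1 : 1 ≤ c1) (hκ : 1 ≤ κ) (hR1 : 1 ≤ R)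
    (hs0 : 0 < s) (hs1 : 1 ≤ s) (hss : s * s = R) (hN : 0 < N) (hL : 0 < L) (hδ2 : 0 < δ2)
    (hm0 : 0 < m) (hm : 2560 * c1 ^ 2 * κ ^ 2 * R ^ 3 * N * L / δ2 ^ 2 ≤ m) :
    20 * L ≤ (δ2 / R) ^ 2 / (8 * (16 * c1 ^ 2 * κ * s * N / m)) := by
  have hc10 : (0:ℝ) < c1 := by linarith
  have hκ0 : (0:ℝ) < κ := by linarith
  have hR0 : (0:ℝ) < R := by linarith
  have heq : (δ2 / R) ^ 2 / (8 * (16 * c1 ^ 2 * κ * s * N / m))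
      = δ2 ^ 2 * m / (128 * c1 ^ 2 * κ * s * N * R ^ 2) := by
    field_simp
    ring
  rw [heq, le_div_iff₀ (by positivity)]
  have h2 : 2560 * c1 ^ 2 * κ ^ 2 * R ^ 3 * N * L ≤ m * δ2 ^ 2 :=
    (div_le_iff₀ (pow_pos hδ2 2)).mp hm
  have hsR : s ≤ R := by nlinarith
  have hsκR : s ≤ κ * R := by nlinarith
  have hnn : (0:ℝ) ≤ 2560 * c1 ^ 2 * κ * N * L * R ^ 2 := by positivity
  calc 20 * L * (128 * c1 ^ 2 * κ * s * N * R ^ 2)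
      = (2560 * c1 ^ 2 * κ * N * L * R ^ 2) * s := by ring
    _ ≤ (2560 * c1 ^ 2 * κ * N * L * R ^ 2) * (κ * R) := mul_le_mul_of_nonneg_left hsκR hnn
    _ = 2560 * c1 ^ 2 * κ ^ 2 * R ^ 3 * N * L := by ring
    _ ≤ m * δ2 ^ 2 := h2
    _ = δ2 ^ 2 * m := by ring

lemma aux_numeric {R N e : ℝ} (hR1 : 1 ≤ R) (hRN : R ≤ N) (hN2 : 2 ≤ N) (he : 0 ≤ e)
    (hee : e ≤ (N ^ 20)⁻¹) : R * (R * (4 * e)) ≤ 2 / N ^ 2 := by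
  have hN0 : (0:ℝ) < N := by linarith
  have hR0 : (0:ℝ) < R := by linarith
  have h1 : R * (R * (4 * e)) ≤ 4 * R ^ 2 * (N ^ 20)⁻¹ := by
    have : R * (R * (4 * e)) = 4 * R ^ 2 * e := by ring
    rw [this]
    exact mul_le_mul_of_nonneg_left hee (by positivity)
  refine h1.trans ?_
  have h2 : 4 * R ^ 2 * (N ^ 20)⁻¹ = (4 * R ^ 2) / N ^ 20 := by ring
  rw [h2, div_le_div_iff₀ (by positivity) (by positivity)]
  have h16 : (2:ℝ) ^ 16 ≤ N ^ 16 := pow_le_pow_left₀ (by norm_num) hN2 16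
  have hR2 : R ^ 2 ≤ N ^ 2 := pow_le_pow_left₀ hR0.le hRN 2
  have hN4 : (0:ℝ) < N ^ 4 := by positivity
  calc 4 * R ^ 2 * N ^ 2 ≤ 4 * N ^ 2 * N ^ 2 := by nlinarith
    _ = 4 * N ^ 4 := by ring
    _ ≤ 2 * 2 ^ 16 * N ^ 4 := by nlinarith
    _ ≤ 2 * N ^ 16 * N ^ 4 := by nlinarith
    _ = 2 * N ^ 20 := by ring
theorem stmt13 : ∃ C0 : ℝ, 0 < C0 ∧
    ∀ (n r : ℕ), 2 ≤ n → ∀ _hr : 1 ≤ r,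
    ∀ (c1 κ : ℝ), 1 ≤ c1 → 1 ≤ κ →
    ∀ (δ2 : ℝ), δ2 ∈ Set.Ioc (0 : ℝ) (3 * r) →
    ∀ (j : Fin n) (qhat : Fin n → Fin n → ℝ), (∀ i, qhat i j ∈ Set.Ioc (0 : ℝ) 1) →
    ∀ (U Ustar : Matrix (Fin n) (Fin r) ℝ), Uᵀ * U = 1 → Ustarᵀ * Ustar = 1 →
    ∀ (m : ℝ),
      (∀ i, (∑ k, (U i k) ^ 2) ≤ (16 * c1 ^ 2 * n / m) * qhat i j) →
      (∀ i, Real.sqrt (∑ k, (U i k) ^ 2) * Real.sqrt (∑ k, (Ustar i k) ^ 2) ≤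
        (8 * c1 * κ * Real.sqrt r * n / m) * qhat i j) →
    ∀ (Ω : Type) [MeasureSpace Ω] [IsProbabilityMeasure (ℙ : Measure Ω)]
      (X : Fin n → Ω → ℝ),
      (∀ i, Measurable (X i)) →
      (∀ i ω, X i ω = 0 ∨ X i ω = 1) →
      iIndepFun X ℙ →
      (∀ i, ℙ {ω | X i ω = 1} = ENNReal.ofReal (qhat i j)) →
      C0 * c1 ^ 2 * κ ^ 2 * r ^ 3 * n * Real.log n / δ2 ^ 2 ≤ m →
      ENNReal.ofReal (1 - 2 / (n : ℝ) ^ 2) ≤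
        ℙ {ω |
          specNorm ((∑ i, (X i ω / qhat i j) •
              Matrix.of (fun k l : Fin r => U i k * U i l)) - 1) ≤ δ2 ∧
          specNorm ((∑ i, (X i ω / qhat i j) •
              Matrix.of (fun k l : Fin r => U i k * Ustar i l)) - Uᵀ * Ustar) ≤ δ2} := by
  refine ⟨2560, by norm_num, ?_⟩
  intro n r hn hr c1 κ hc1 hκ δ2 hδ2 j qhat hqhat U Ustar hU hUstar m hrow hrow2
    Ω _ _ X hmX h01 hind hqX hm
  obtain ⟨hδ20, hδ2r⟩ := hδ2
  -- basic positivity facts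
  have hrpos : 0 < r := hr
  have hR0 : (0:ℝ) < r := by exact_mod_cast hrpos
  have hR1 : (1:ℝ) ≤ r := by exact_mod_cast hr
  have hN0 : (0:ℝ) < n := by positivity
  have hN2 : (2:ℝ) ≤ n := by exact_mod_cast hn
  have hc10 : (0:ℝ) < c1 := by linarith
  have hκ0 : (0:ℝ) < κ := by linarith
  have hL : 0 < Real.log n := Real.log_pos (by linarith)
  have hnum : (0:ℝ) < 2560 * c1 ^ 2 * κ ^ 2 * (r:ℝ) ^ 3 * (n:ℝ) * Real.log n :=
    mul_pos (mul_pos (mul_pos (mul_pos (mul_pos (by norm_num) (pow_pos hc10 2))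
      (pow_pos hκ0 2)) (pow_pos hR0 3)) hN0) hL
  have hm0 : (0:ℝ) < m := lt_of_lt_of_le (div_pos hnum (pow_pos hδ20 2)) hm
  set s : ℝ := Real.sqrt r with hs_def
  have hs0 : 0 < s := Real.sqrt_pos.mpr hR0
  have hs1 : (1:ℝ) ≤ s := by
    rw [hs_def, show (1:ℝ) = Real.sqrt 1 from (Real.sqrt_one).symm]
    exact Real.sqrt_le_sqrt hR1
  have hss : s * s = (r:ℝ) := Real.mul_self_sqrt hR0.le
  set M : ℝ := 16 * c1 ^ 2 * κ * s * n / m with hM_def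
  have hM0 : 0 < M := by
    rw [hM_def]
    exact div_pos (mul_pos (mul_pos (mul_pos (mul_pos (by norm_num) (pow_pos hc10 2)) hκ0)
      hs0) hN0) hm0
  set t : ℝ := δ2 / r with ht_def
  have ht0 : 0 < t := div_pos hδ20 hR0
  have ht3 : t ≤ 3 := by
    rw [ht_def, div_le_iff₀ hR0]; linarith
  -- q facts
  set q : Fin n → ℝ := fun i => qhat i j with hq_def
  have hq0 : ∀ i, 0 < q i := fun i => (hqhat i).1
  have hq1 : ∀ i, q i ≤ 1 := fun i => (hqhat i).2
  -- r ≤ n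
  have hrn : (r:ℝ) ≤ (n:ℝ) := by
    have h1 : (Uᵀ * U).rank = r := by rw [hU, Matrix.rank_one, Fintype.card_fin]
    have h2 : (Uᵀ * U).rank ≤ (Uᵀ).rank := Matrix.rank_mul_le_left _ _
    have h3 : (Uᵀ).rank ≤ Fintype.card (Fin n) := Matrix.rank_le_card_width _
    have : r ≤ n := by rw [← h1]; simpa [Fintype.card_fin] using h2.trans h3
    exact_mod_cast this
  -- column identities
  have hUU : ∀ k l : Fin r, (∑ i, U i k * U i l) = (1 : Matrix (Fin r) (Fin r) ℝ) k l := by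
    intro k l
    have := Matrix.ext_iff.mpr hU k l
    rw [Matrix.mul_apply] at this
    simpa [Matrix.transpose_apply] using this
  have hUUs : ∀ k l : Fin r, (∑ i, U i k * Ustar i l) = (Uᵀ * Ustar) k l := by
    intro k l
    rw [Matrix.mul_apply]
    simp [Matrix.transpose_apply]
  have hcolU : ∀ k : Fin r, (∑ i, U i k ^ 2) = 1 := by
    intro k
    have := hUU k k
    rw [Matrix.one_apply_eq] at this
    rw [← this]
    exact Finset.sum_congr rfl (fun i _ => (sq (U i k)))
  have hcolUs : ∀ k : Fin r, (∑ i, Ustar i k ^ 2) = 1 := by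
    intro k
    have := Matrix.ext_iff.mpr hUstar k k
    rw [Matrix.mul_apply, Matrix.one_apply_eq] at this
    simp only [Matrix.transpose_apply] at this
    rw [← this]
    exact Finset.sum_congr rfl (fun i _ => (sq (Ustar i k)))
  -- coefficient bounds
  have habsB : ∀ (k l : Fin r) (i : Fin n), |U i k * U i l| ≤ M * q i := by
    intro k l i
    have h1 : U i k ^ 2 ≤ ∑ k', U i k' ^ 2 :=
      Finset.single_le_sum (f := fun k' => U i k' ^ 2) (fun _ _ => sq_nonneg _)
        (Finset.mem_univ k)
    have h2 : U i l ^ 2 ≤ ∑ k', U i k' ^ 2 :=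
      Finset.single_le_sum (f := fun k' => U i k' ^ 2) (fun _ _ => sq_nonneg _)
        (Finset.mem_univ l)
    have habs : |U i k * U i l| ≤ ∑ k', U i k' ^ 2 := aux_abs_mul_le h1 h2
    refine habs.trans ((hrow i).trans ?_)
    have hcoef : 16 * c1 ^ 2 * (n:ℝ) / m ≤ M := aux_coefB hc1 hκ hs1 hN0 hm0
    exact mul_le_mul_of_nonneg_right hcoef (hq0 i).le
  have habsC : ∀ (k l : Fin r) (i : Fin n), |U i k * Ustar i l| ≤ M * q i := by
    intro k l i
    have h1 : |U i k| ≤ Real.sqrt (∑ k', U i k' ^ 2) :=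
      Real.abs_le_sqrt (Finset.single_le_sum (f := fun k' => U i k' ^ 2)
        (fun _ _ => sq_nonneg _) (Finset.mem_univ k))
    have h2 : |Ustar i l| ≤ Real.sqrt (∑ k', Ustar i k' ^ 2) :=
      Real.abs_le_sqrt (Finset.single_le_sum (f := fun k' => Ustar i k' ^ 2)
        (fun _ _ => sq_nonneg _) (Finset.mem_univ l))
    have habs : |U i k * Ustar i l| ≤
        Real.sqrt (∑ k', U i k' ^ 2) * Real.sqrt (∑ k', Ustar i k' ^ 2) := by
      rw [abs_mul]
      exact mul_le_mul h1 h2 (abs_nonneg _) (Real.sqrt_nonneg _)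
    refine habs.trans ((hrow2 i).trans ?_)
    have hcoef : 8 * c1 * κ * Real.sqrt r * (n:ℝ) / m ≤ M := by
      rw [← hs_def]
      exact aux_coefC hc1 hκ hs1 hN0 hm0
    exact mul_le_mul_of_nonneg_right hcoef (hq0 i).le
  -- sum bounds
  have hsumB : ∀ k l : Fin r, (∑ i, |U i k * U i l|) ≤ 1 := by
    intro k l
    have h := Finset.sum_mul_sq_le_sq_mul_sq Finset.univ (fun i => |U i k|) (fun i => |U i l|)
    simp only [sq_abs] at h
    rw [hcolU k, hcolU l, mul_one] at h
    have hS : (0:ℝ) ≤ ∑ i, |U i k| * |U i l| :=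
      Finset.sum_nonneg (fun i _ => mul_nonneg (abs_nonneg _) (abs_nonneg _))
    have : (∑ i, |U i k * U i l|) = ∑ i, |U i k| * |U i l| :=
      Finset.sum_congr rfl (fun i _ => abs_mul _ _)
    rw [this]
    exact aux_sum_le_one h hS
  have hsumC : ∀ k l : Fin r, (∑ i, |U i k * Ustar i l|) ≤ 1 := by
    intro k l
    have h := Finset.sum_mul_sq_le_sq_mul_sq Finset.univ (fun i => |U i k|) (fun i => |Ustar i l|)
    simp only [sq_abs] at h
    rw [hcolU k, hcolUs l, mul_one] at h
    have hS : (0:ℝ) ≤ ∑ i, |U i k| * |Ustar i l| :=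
      Finset.sum_nonneg (fun i _ => mul_nonneg (abs_nonneg _) (abs_nonneg _))
    have : (∑ i, |U i k * Ustar i l|) = ∑ i, |U i k| * |Ustar i l| :=
      Finset.sum_congr rfl (fun i _ => abs_mul _ _)
    rw [this]
    exact aux_sum_le_one h hS
  -- tail probabilities
  have hpB : ∀ k l : Fin r,
      ℙ {ω | t < |∑ i, (U i k * U i l) * (X i ω / q i - 1)|} ≤
        2 * ENNReal.ofReal (Real.exp (-(t ^ 2 / (8 * M)))) := by
    intro k l
    exact twoSided X q (fun i => U i k * U i l) hmX h01 hind hqX hq0 hq1 hM0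
      (habsB k l) (hsumB k l) ht0 ht3
  have hpC : ∀ k l : Fin r,
      ℙ {ω | t < |∑ i, (U i k * Ustar i l) * (X i ω / q i - 1)|} ≤
        2 * ENNReal.ofReal (Real.exp (-(t ^ 2 / (8 * M)))) := by
    intro k l
    exact twoSided X q (fun i => U i k * Ustar i l) hmX h01 hind hqX hq0 hq1 hM0
      (habsC k l) (hsumC k l) ht0 ht3
  -- entry identities
  have hentryB : ∀ (ω : Ω) (k l : Fin r),
      ((∑ i, (X i ω / qhat i j) • Matrix.of (fun k l : Fin r => U i k * U i l)) - 1) k l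
        = ∑ i, (U i k * U i l) * (X i ω / q i - 1) := by
    intro ω k l
    simp only [Matrix.sub_apply, Matrix.sum_apply, Matrix.smul_apply, Matrix.of_apply,
      smul_eq_mul]
    rw [← hUU k l, ← Finset.sum_sub_distrib]
    exact Finset.sum_congr rfl (fun i _ => by rw [hq_def]; ring)
  have hentryC : ∀ (ω : Ω) (k l : Fin r),
      ((∑ i, (X i ω / qhat i j) • Matrix.of (fun k l : Fin r => U i k * Ustar i l))
          - Uᵀ * Ustar) k l
        = ∑ i, (U i k * Ustar i l) * (X i ω / q i - 1) := by
    intro ω k l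
    simp only [Matrix.sub_apply, Matrix.sum_apply, Matrix.smul_apply, Matrix.of_apply,
      smul_eq_mul]
    rw [← hUUs k l, ← Finset.sum_sub_distrib]
    exact Finset.sum_congr rfl (fun i _ => by rw [hq_def]; ring)
  -- bad events
  set badB : Fin r → Fin r → Set Ω :=
    fun k l => {ω | t < |∑ i, (U i k * U i l) * (X i ω / q i - 1)|} with hbadB_def
  set badC : Fin r → Fin r → Set Ω :=
    fun k l => {ω | t < |∑ i, (U i k * Ustar i l) * (X i ω / q i - 1)|} with hbadC_def
  have hmesB : ∀ k l, MeasurableSet (badB k l) := by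
    intro k l
    exact measurableSet_lt measurable_const
      ((Finset.measurable_sum Finset.univ (fun i _ =>
        (((hmX i).div_const (q i)).sub measurable_const).const_mul (U i k * U i l))).abs)
  have hmesC : ∀ k l, MeasurableSet (badC k l) := by
    intro k l
    exact measurableSet_lt measurable_const
      ((Finset.measurable_sum Finset.univ (fun i _ =>
        (((hmX i).div_const (q i)).sub measurable_const).const_mul (U i k * Ustar i l))).abs)
  set Bad : Set Ω := ⋃ k, ⋃ l, (badB k l ∪ badC k l) with hBad_def
  have hBad_meas : MeasurableSet Bad :=
    MeasurableSet.iUnion fun k => MeasurableSet.iUnion fun l => (hmesB k l).union (hmesC k l)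
  -- inclusion
  have hsubset : Badᶜ ⊆ {ω |
      specNorm ((∑ i, (X i ω / qhat i j) •
          Matrix.of (fun k l : Fin r => U i k * U i l)) - 1) ≤ δ2 ∧
      specNorm ((∑ i, (X i ω / qhat i j) •
          Matrix.of (fun k l : Fin r => U i k * Ustar i l)) - Uᵀ * Ustar) ≤ δ2} := by
    intro ω hω
    simp only [hBad_def, Set.mem_compl_iff, Set.mem_iUnion, Set.mem_union, hbadB_def,
      hbadC_def, Set.mem_setOf_eq, not_exists, not_or, not_lt] at hω
    constructor
    · refine specNorm_le_of_entries hrpos _ hδ20.le (fun k l => ?_)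
      rw [hentryB ω k l]
      exact (hω k l).1
    · refine specNorm_le_of_entries hrpos _ hδ20.le (fun k l => ?_)
      rw [hentryC ω k l]
      exact (hω k l).2
  -- union bound
  set E : ENNReal := ENNReal.ofReal (Real.exp (-(t ^ 2 / (8 * M)))) with hE_def
  have hBad_le : ℙ Bad ≤ (r : ENNReal) * ((r : ENNReal) * (4 * E)) := by
    calc ℙ Bad ≤ ∑' k : Fin r, ℙ (⋃ l, (badB k l ∪ badC k l)) := measure_iUnion_le _
      _ = ∑ k : Fin r, ℙ (⋃ l, (badB k l ∪ badC k l)) := tsum_fintype _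
      _ ≤ ∑ k : Fin r, ∑ l : Fin r, ℙ (badB k l ∪ badC k l) := by
          refine Finset.sum_le_sum (fun k _ => ?_)
          calc ℙ (⋃ l, (badB k l ∪ badC k l)) ≤ ∑' l : Fin r, ℙ (badB k l ∪ badC k l) :=
                measure_iUnion_le _
            _ = ∑ l : Fin r, ℙ (badB k l ∪ badC k l) := tsum_fintype _
      _ ≤ ∑ _k : Fin r, ∑ _l : Fin r, 4 * E := by
          refine Finset.sum_le_sum (fun k _ => Finset.sum_le_sum (fun l _ => ?_))
          calc ℙ (badB k l ∪ badC k l) ≤ ℙ (badB k l) + ℙ (badC k l) := measure_union_le _ _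
            _ ≤ 2 * E + 2 * E := add_le_add (hpB k l) (hpC k l)
            _ = 4 * E := by ring
      _ = (r : ENNReal) * ((r : ENNReal) * (4 * E)) := by
          simp [Finset.sum_const, Finset.card_univ, nsmul_eq_mul, mul_assoc]
  -- numeric bound
  have hexp_le : Real.exp (-(t ^ 2 / (8 * M))) ≤ ((n:ℝ) ^ 20)⁻¹ := by
    have h20 : 20 * Real.log n ≤ t ^ 2 / (8 * M) := by
      rw [ht_def, hM_def]
      exact aux_exponent hc1 hκ hR1 hs0 hs1 hss hN0 hL hδ20 hm0 hm
    have : Real.exp (-(t ^ 2 / (8 * M))) ≤ Real.exp (-(20 * Real.log n)) :=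
      Real.exp_le_exp.mpr (by linarith)
    refine this.trans ?_
    rw [Real.exp_neg]
    rw [show (20:ℝ) * Real.log n = (20:ℕ) * Real.log n by norm_num, Real.exp_nat_mul,
      Real.exp_log hN0]
  have hBad_le2 : ℙ Bad ≤ ENNReal.ofReal (2 / (n:ℝ) ^ 2) := by
    refine hBad_le.trans ?_
    have hcast : (r : ENNReal) * ((r : ENNReal) * (4 * E)) =
        ENNReal.ofReal ((r:ℝ) * ((r:ℝ) * (4 * Real.exp (-(t ^ 2 / (8 * M)))))) := by
      rw [hE_def, ENNReal.ofReal_mul hR0.le, ENNReal.ofReal_mul hR0.le,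
        ENNReal.ofReal_mul (by norm_num : (0:ℝ) ≤ 4)]
      simp [ENNReal.ofReal_natCast]
    rw [hcast]
    exact ENNReal.ofReal_le_ofReal
      (aux_numeric hR1 hrn hN2 (Real.exp_pos _).le hexp_le)
  -- conclude
  calc ENNReal.ofReal (1 - 2 / (n : ℝ) ^ 2)
      = 1 - ENNReal.ofReal (2 / (n:ℝ) ^ 2) := by
        rw [ENNReal.ofReal_sub _ (by positivity), ENNReal.ofReal_one]
    _ ≤ 1 - ℙ Bad := tsub_le_tsub_left hBad_le2 1
    _ = ℙ Badᶜ := (prob_compl_eq_one_sub hBad_meas).symm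
    _ ≤ _ := measure_mono hsubset
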